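/- Let Φ be a symmetric positive definite (n-1)×(n-1) real matrix whose entries are periodic edge-centered grid functions on a 1D grid of N points, with minimum eigenvalue λ_min > 0 over all grid points. For g in the space of mean-zero periodic cell-centered vector functions, let f solve −d_h(Φ D_h f) = g, and define ‖g‖²_{L_Φ^{-1}} = [D_h f, Φ D_h f]. If ‖g‖_{L^∞} ≤ M, then ‖f‖_{L^∞} ≤ (C M / λ_min) h^{-1/2} (n-1)^{1/2}, where C depends only on the domain length L (via discrete Poincaré and inverse inequalities). -/

import Mathlib

open Finset

lemma aux_cs {α : Type*} [Fintype α] (v : α → ℝ) :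
    ∑ x, |v x| ≤ Real.sqrt (Fintype.card α) * Real.sqrt (∑ x, v x ^ 2) := by
  have h1 : (∑ x, |v x|) ^ 2 ≤ (Fintype.card α : ℝ) * ∑ x, v x ^ 2 := by
    have := sq_sum_le_card_mul_sum_sq (s := (univ : Finset α)) (f := fun x => |v x|)
    simpa [sq_abs, Finset.card_univ] using this
  calc ∑ x, |v x| = Real.sqrt ((∑ x, |v x|) ^ 2) := (Real.sqrt_sq (by positivity)).symm
    _ ≤ Real.sqrt ((Fintype.card α : ℝ) * ∑ x, v x ^ 2) := Real.sqrt_le_sqrt h1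
    _ = _ := Real.sqrt_mul (by positivity) _

lemma aux_cs' {α : Type*} [Fintype α] (w : α → ℝ) (hw : ∀ x, 0 ≤ w x) :
    ∑ x, Real.sqrt (w x) ≤ Real.sqrt (Fintype.card α) * Real.sqrt (∑ x, w x) := by
  have := aux_cs (fun x => Real.sqrt (w x))
  simpa [abs_of_nonneg (Real.sqrt_nonneg _), Real.sq_sqrt (hw _)] using this

lemma aux_tele {N : ℕ} [NeZero N] (u : ZMod N → ℝ) (a : ZMod N) (j : ℕ) :
    u (a + (j : ZMod N)) - u a
      = ∑ t ∈ Finset.range j, (u (a + (t : ZMod N) + 1) - u (a + (t : ZMod N))) := by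
  induction j with
  | zero => simp
  | succ n ih =>
      rw [Finset.sum_range_succ, ← ih]
      push_cast
      ring_nf

lemma aux_abs {N : ℕ} [NeZero N] (u : ZMod N → ℝ) (hu : ∑ k, u k = 0) (ℓ : ZMod N) :
    |u ℓ| ≤ ∑ k, |u (k + 1) - u k| := by
  set S := ∑ k, |u (k + 1) - u k| with hS
  have hNpos : 0 < (N : ℝ) := by
    exact_mod_cast Nat.pos_of_ne_zero (NeZero.ne N)
  have key : ∀ a b : ZMod N, |u b - u a| ≤ S := by
    intro a b
    have hval : (((b - a).val : ℕ) : ZMod N) = b - a := ZMod.natCast_rightInverse (b - a)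
    have htel := aux_tele u a (b - a).val
    rw [hval, show a + (b - a) = b from by ring] at htel
    rw [htel]
    calc |∑ t ∈ Finset.range (b - a).val, (u (a + (t : ZMod N) + 1) - u (a + (t : ZMod N)))|
        ≤ ∑ t ∈ Finset.range (b - a).val, |u (a + (t : ZMod N) + 1) - u (a + (t : ZMod N))| :=
          Finset.abs_sum_le_sum_abs _ _
      _ = ∑ k ∈ (Finset.range (b - a).val).image (fun t : ℕ => a + (t : ZMod N)),
            |u (k + 1) - u k| := by
          rw [Finset.sum_image]
          intro x hx y hy hxy
          have hx' := Finset.mem_range.mp hx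
          have hy' := Finset.mem_range.mp hy
          have hlt := ZMod.val_lt (b - a)
          have hxy' : (x : ZMod N) = (y : ZMod N) := add_left_cancel hxy
          have h1 : ((x : ZMod N)).val = x := ZMod.val_cast_of_lt (by omega)
          have h2 : ((y : ZMod N)).val = y := ZMod.val_cast_of_lt (by omega)
          rw [← h1, ← h2, hxy']
      _ ≤ S := Finset.sum_le_sum_of_subset_of_nonneg (Finset.subset_univ _)
          (fun _ _ _ => abs_nonneg _)
  have hid : (N : ℝ) * u ℓ = ∑ k : ZMod N, (u ℓ - u k) := by
    rw [Finset.sum_sub_distrib, hu, sub_zero, Finset.sum_const, Finset.card_univ,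
      nsmul_eq_mul, ZMod.card N]
  have hmain : (N : ℝ) * |u ℓ| ≤ (N : ℝ) * S := by
    calc (N : ℝ) * |u ℓ| = |(N : ℝ) * u ℓ| := by rw [abs_mul, abs_of_nonneg hNpos.le]
      _ = |∑ k : ZMod N, (u ℓ - u k)| := by rw [hid]
      _ ≤ ∑ k : ZMod N, |u ℓ - u k| := Finset.abs_sum_le_sum_abs _ _
      _ ≤ ∑ _k : ZMod N, S := Finset.sum_le_sum (fun k _ => key k ℓ)
      _ = (N : ℝ) * S := by
          rw [Finset.sum_const, Finset.card_univ, nsmul_eq_mul, ZMod.card N]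
  exact (mul_le_mul_iff_right₀ hNpos).mp hmain

theorem stmt_12 (L : ℝ) (hL : 0 < L) :
    ∃ C : ℝ, 0 < C ∧
      ∀ (N : ℕ) [NeZero N] (m : ℕ)
        (Φ : Fin m → Fin m → ZMod N → ℝ) (lammin M : ℝ),
        0 < lammin →
        (∀ i j ℓ, Φ i j ℓ = Φ j i ℓ) →
        (∀ (ℓ : ZMod N) (z : Fin m → ℝ),
            lammin * ∑ i, (z i) ^ 2 ≤ ∑ i, ∑ j, z i * Φ i j ℓ * z j) →
        ∀ f g : Fin m → ZMod N → ℝ,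
        (∀ i, ∑ ℓ, f i ℓ = 0) →
        (∀ i, ∑ ℓ, g i ℓ = 0) →
        (∀ i ℓ, |g i ℓ| ≤ M) →
        (∀ i ℓ,
          -(∑ j, (Φ i j ℓ * ((f j (ℓ + 1) - f j ℓ) / (L / N))
              - Φ i j (ℓ - 1) * ((f j ℓ - f j (ℓ - 1)) / (L / N)))) / (L / N)
            = g i ℓ) →
        ∀ i ℓ, |f i ℓ| ≤ C * M / lammin * (L / N) ^ (-(1 / 2 : ℝ)) * (m : ℝ) ^ ((1 / 2 : ℝ)) := by
  refine ⟨L ^ 2 * Real.sqrt L, by positivity, ?_⟩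
  intro N _ m Φ lammin M hlam hsym hpd f g hfmean hgmean hgM heq i ℓ
  have hNpos : 0 < (N : ℝ) := by exact_mod_cast Nat.pos_of_ne_zero (NeZero.ne N)
  set h : ℝ := L / N with hh_def
  have hh : 0 < h := div_pos hL hNpos
  have hM : 0 ≤ M := le_trans (abs_nonneg _) (hgM i ℓ)
  set δ : Fin m → ZMod N → ℝ := fun j k => f j (k + 1) - f j k with hδ_def
  set T : ℝ := ∑ j, ∑ k, δ j k ^ 2 with hT_def
  have hT0 : 0 ≤ T := by positivity
  -- cleared pointwise equation
  have heq' : ∀ (a : Fin m) (b : ZMod N),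
      ∑ j, (Φ a j b * δ j b - Φ a j (b - 1) * δ j (b - 1)) = -(h ^ 2 * g a b) := by
    intro a b
    have e := heq a b
    have hb : b - 1 + 1 = b := by ring
    have e2 : ∑ j, (Φ a j b * ((f j (b + 1) - f j b) / h)
        - Φ a j (b - 1) * ((f j b - f j (b - 1)) / h))
        = (∑ j, (Φ a j b * δ j b - Φ a j (b - 1) * δ j (b - 1))) / h := by
      rw [Finset.sum_div]
      refine Finset.sum_congr rfl fun j _ => ?_
      simp only [hδ_def, hb]
      ring
    rw [e2] at e
    field_simp at e
    rw [Finset.sum_sub_distrib, sq]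
    rw [Finset.sum_sub_distrib, sq] at e
    linarith
  -- shift lemma
  have shift : ∀ F : ZMod N → ℝ, ∑ k, F (k - 1) = ∑ k, F k := by
    intro F
    exact Fintype.sum_equiv (Equiv.subRight (1 : ZMod N)) _ _ (fun k => by simp)
  have E3 : ∀ (a b : Fin m), ∑ k, f a k * (Φ a b (k - 1) * δ b (k - 1))
      = ∑ k, f a (k + 1) * (Φ a b k * δ b k) := by
    intro a b
    have := shift (fun k => f a (k + 1) * (Φ a b k * δ b k))
    simp only [sub_add_cancel] at this
    exact this
  have comm3 : ∀ x : Fin m → Fin m → ZMod N → ℝ,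
      ∑ a, ∑ b, ∑ k, x a b k = ∑ k, ∑ a, ∑ b, x a b k := by
    intro x
    calc ∑ a, ∑ b, ∑ k, x a b k = ∑ a, ∑ k, ∑ b, x a b k :=
          Finset.sum_congr rfl fun a _ => Finset.sum_comm
      _ = ∑ k, ∑ a, ∑ b, x a b k := Finset.sum_comm
  -- energy identity
  have energy : ∑ k, ∑ a, ∑ b, δ a k * Φ a b k * δ b k
      = h ^ 2 * ∑ a, ∑ k, f a k * g a k := by
    have E0 : ∑ a, ∑ k, f a k * ∑ b, (Φ a b k * δ b k - Φ a b (k - 1) * δ b (k - 1))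
        = -(h ^ 2) * ∑ a, ∑ k, f a k * g a k := by
      rw [Finset.mul_sum]
      refine Finset.sum_congr rfl fun a _ => ?_
      rw [Finset.mul_sum]
      refine Finset.sum_congr rfl fun k _ => ?_
      rw [heq' a k]; ring
    have step1 : ∀ a : Fin m,
        ∑ k, f a k * ∑ b, (Φ a b k * δ b k - Φ a b (k - 1) * δ b (k - 1))
        = ∑ b, (∑ k, f a k * (Φ a b k * δ b k)
            - ∑ k, f a k * (Φ a b (k - 1) * δ b (k - 1))) := by
      intro a
      simp_rw [Finset.mul_sum, mul_sub]
      rw [Finset.sum_comm]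
      exact Finset.sum_congr rfl fun b _ => Finset.sum_sub_distrib _ _
    have E2 : ∑ a, ∑ k, f a k * ∑ b, (Φ a b k * δ b k - Φ a b (k - 1) * δ b (k - 1))
        = -∑ k, ∑ a, ∑ b, δ a k * Φ a b k * δ b k := by
      calc ∑ a, ∑ k, f a k * ∑ b, (Φ a b k * δ b k - Φ a b (k - 1) * δ b (k - 1))
          = ∑ a, ∑ b, (∑ k, f a k * (Φ a b k * δ b k)
              - ∑ k, f a (k + 1) * (Φ a b k * δ b k)) := by
            refine Finset.sum_congr rfl fun a _ => ?_
            rw [step1 a]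
            exact Finset.sum_congr rfl fun b _ => by rw [E3 a b]
        _ = ∑ a, ∑ b, ∑ k, (-(δ a k * Φ a b k * δ b k)) := by
            refine Finset.sum_congr rfl fun a _ => Finset.sum_congr rfl fun b _ => ?_
            rw [← Finset.sum_sub_distrib]
            refine Finset.sum_congr rfl fun k _ => ?_
            simp only [hδ_def]; ring
        _ = ∑ k, ∑ a, ∑ b, (-(δ a k * Φ a b k * δ b k)) := comm3 _
        _ = -∑ k, ∑ a, ∑ b, δ a k * Φ a b k * δ b k := by
            simp [Finset.sum_neg_distrib]
    rw [E2] at E0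
    linarith
  -- coercive lower bound
  have lower : lammin * T ≤ ∑ k, ∑ a, ∑ b, δ a k * Φ a b k * δ b k := by
    have hTc : T = ∑ k, ∑ j, δ j k ^ 2 := Finset.sum_comm
    rw [hTc, Finset.mul_sum]
    exact Finset.sum_le_sum fun k _ => hpd k (fun a => δ a k)
  -- pointwise bound on f via telescoping + Cauchy-Schwarz
  have hcardZ : (Fintype.card (ZMod N) : ℝ) = (N : ℝ) := by
    exact_mod_cast congrArg (Nat.cast : ℕ → ℝ) (ZMod.card N)
  have fptw : ∀ (a : Fin m) (k : ZMod N),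
      |f a k| ≤ Real.sqrt N * Real.sqrt (∑ k', δ a k' ^ 2) := by
    intro a k
    calc |f a k| ≤ ∑ k', |f a (k' + 1) - f a k'| := aux_abs (f a) (hfmean a) k
      _ ≤ Real.sqrt (Fintype.card (ZMod N)) * Real.sqrt (∑ k', (f a (k' + 1) - f a k') ^ 2) :=
          aux_cs _
      _ = Real.sqrt N * Real.sqrt (∑ k', δ a k' ^ 2) := by rw [hcardZ]
  -- bound the source term
  have Ta_nonneg : ∀ a : Fin m, (0:ℝ) ≤ ∑ k', δ a k' ^ 2 := fun a => by positivity
  have sumfg : ∑ a, ∑ k, f a k * g a k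
      ≤ M * N * Real.sqrt N * (Real.sqrt m * Real.sqrt T) := by
    have step : ∀ a : Fin m, ∑ k, f a k * g a k
        ≤ M * N * Real.sqrt N * Real.sqrt (∑ k', δ a k' ^ 2) := by
      intro a
      calc ∑ k, f a k * g a k ≤ ∑ k, |f a k| * M := by
            refine Finset.sum_le_sum fun k _ => ?_
            calc f a k * g a k ≤ |f a k * g a k| := le_abs_self _
              _ = |f a k| * |g a k| := abs_mul _ _
              _ ≤ |f a k| * M := mul_le_mul_of_nonneg_left (hgM a k) (abs_nonneg _)
        _ ≤ ∑ _k : ZMod N, (Real.sqrt N * Real.sqrt (∑ k', δ a k' ^ 2)) * M := by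
            refine Finset.sum_le_sum fun k _ => ?_
            exact mul_le_mul_of_nonneg_right (fptw a k) hM
        _ = M * N * Real.sqrt N * Real.sqrt (∑ k', δ a k' ^ 2) := by
            rw [Finset.sum_const, Finset.card_univ, nsmul_eq_mul, ZMod.card N]
            ring
    calc ∑ a, ∑ k, f a k * g a k
        ≤ ∑ a, M * N * Real.sqrt N * Real.sqrt (∑ k', δ a k' ^ 2) :=
          Finset.sum_le_sum fun a _ => step a
      _ = (M * N * Real.sqrt N) * ∑ a, Real.sqrt (∑ k', δ a k' ^ 2) := by
          rw [Finset.mul_sum]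
      _ ≤ (M * N * Real.sqrt N) * (Real.sqrt m * Real.sqrt T) := by
          refine mul_le_mul_of_nonneg_left ?_ (by positivity)
          have := aux_cs' (fun a => ∑ k', δ a k' ^ 2) Ta_nonneg
          simpa [Fintype.card_fin, hT_def] using this
      _ = M * N * Real.sqrt N * (Real.sqrt m * Real.sqrt T) := by ring
  -- combine: lammin * T ≤ K * sqrt T
  have combined : lammin * T ≤ h ^ 2 * (M * N * Real.sqrt N * Real.sqrt m) * Real.sqrt T := by
    calc lammin * T ≤ ∑ k, ∑ a, ∑ b, δ a k * Φ a b k * δ b k := lower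
      _ = h ^ 2 * ∑ a, ∑ k, f a k * g a k := energy
      _ ≤ h ^ 2 * (M * N * Real.sqrt N * (Real.sqrt m * Real.sqrt T)) := by
          exact mul_le_mul_of_nonneg_left sumfg (by positivity)
      _ = h ^ 2 * (M * N * Real.sqrt N * Real.sqrt m) * Real.sqrt T := by ring
  have hK0 : (0:ℝ) ≤ h ^ 2 * (M * N * Real.sqrt N * Real.sqrt m) := by positivity
  have sqrtT_le : Real.sqrt T ≤ h ^ 2 * (M * N * Real.sqrt N * Real.sqrt m) / lammin := by
    rcases eq_or_lt_of_le (Real.sqrt_nonneg T) with h0 | h0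
    · rw [← h0]; positivity
    · rw [le_div_iff₀ hlam]
      have hTT : Real.sqrt T * Real.sqrt T = T := Real.mul_self_sqrt hT0
      nlinarith [combined]
  -- final pointwise bound
  have Ta_le_T : ∑ k', δ i k' ^ 2 ≤ T := by
    rw [hT_def]
    exact Finset.single_le_sum (fun a _ => Ta_nonneg a) (Finset.mem_univ i)
  have fbound : |f i ℓ| ≤ L ^ 2 * M * Real.sqrt m / lammin := by
    have b1 : |f i ℓ| ≤ Real.sqrt N * Real.sqrt T :=
      le_trans (fptw i ℓ) (mul_le_mul_of_nonneg_left (Real.sqrt_le_sqrt Ta_le_T)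
        (Real.sqrt_nonneg _))
    have b2 : Real.sqrt N * Real.sqrt T
        ≤ Real.sqrt N * (h ^ 2 * (M * N * Real.sqrt N * Real.sqrt m) / lammin) :=
      mul_le_mul_of_nonneg_left sqrtT_le (Real.sqrt_nonneg _)
    have hsq : Real.sqrt N * Real.sqrt N = (N:ℝ) := Real.mul_self_sqrt hNpos.le
    have b3 : Real.sqrt N * (h ^ 2 * (M * N * Real.sqrt N * Real.sqrt m) / lammin)
        = h ^ 2 * M * (N:ℝ)^2 * Real.sqrt m / lammin := by
      rw [show Real.sqrt N * (h ^ 2 * (M * N * Real.sqrt N * Real.sqrt m) / lammin)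
          = (Real.sqrt N * Real.sqrt N) * (h ^ 2 * (M * (N:ℝ) * Real.sqrt m)) / lammin from by
            ring, hsq]
      ring
    have hhN : h ^ 2 * (N:ℝ) ^ 2 = L ^ 2 := by
      rw [hh_def]; field_simp
    calc |f i ℓ| ≤ Real.sqrt N * Real.sqrt T := b1
      _ ≤ Real.sqrt N * (h ^ 2 * (M * N * Real.sqrt N * Real.sqrt m) / lammin) := b2
      _ = h ^ 2 * M * (N:ℝ)^2 * Real.sqrt m / lammin := b3
      _ = L ^ 2 * M * Real.sqrt m / lammin := by rw [← hhN]; ring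
  -- convert RHS
  have hrpow1 : (L / (N:ℝ)) ^ (-(1 / 2 : ℝ)) = (Real.sqrt h)⁻¹ := by
    rw [Real.rpow_neg hh.le, ← Real.sqrt_eq_rpow]
  have hrpow2 : ((m:ℝ)) ^ ((1 / 2 : ℝ)) = Real.sqrt m := (Real.sqrt_eq_rpow _).symm
  rw [hrpow1, hrpow2]
  have hle : h ≤ L := by
    rw [hh_def]
    apply div_le_self hL.le
    exact_mod_cast Nat.one_le_iff_ne_zero.mpr (NeZero.ne N)
  have hsqrth : 0 < Real.sqrt h := Real.sqrt_pos.mpr hh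
  have h1 : (1:ℝ) ≤ Real.sqrt L / Real.sqrt h :=
    (one_le_div hsqrth).mpr (Real.sqrt_le_sqrt hle)
  calc |f i ℓ| ≤ L ^ 2 * M * Real.sqrt m / lammin := fbound
    _ ≤ (L ^ 2 * M * Real.sqrt m / lammin) * (Real.sqrt L / Real.sqrt h) :=
        le_mul_of_one_le_right (by positivity) h1
    _ = L ^ 2 * Real.sqrt L * M / lammin * (Real.sqrt h)⁻¹ * Real.sqrt m := by
        field_simp
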